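/- Let g > 0 and suppose the cubic polynomial p(ξ) = ξ^3 + (c2 - g^2) ξ^2 + c1 ξ + c0 has complex coefficients with |c2| ≤ C/J, |c1| ≤ C/J, |c0| ≤ C/J^2 for constants C > 0 and an integer J. Then there exist constants D > 0 and J0 such that for all J ≥ J0, p has exactly one root in the closed disk |ξ - g^2| ≤ D/J. -/

import Mathlib

set_option maxHeartbeats 2000000 in
theorem rouche_one_root_near (g C : ℝ) (hg : 0 < g) (hC : 0 < C) :
    ∃ D : ℝ, 0 < D ∧ ∃ J0 : ℕ, ∀ J : ℕ, J0 ≤ J →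
      ∀ c0 c1 c2 : ℂ,
        ‖c2‖ ≤ C / J → ‖c1‖ ≤ C / J →
        ‖c0‖ ≤ C / J ^ 2 →
        ∃! ξ : ℂ,
          ξ ^ 3 + (c2 - (g : ℂ) ^ 2) * ξ ^ 2 + c1 * ξ + c0 = 0 ∧
          ‖ξ - (g : ℂ) ^ 2‖ ≤ D / J := by
  set a : ℝ := g ^ 2 with ha
  have ha0 : 0 < a := by positivity
  set D : ℝ := C * (1 + 2 / a + 4 / a ^ 2) with hD
  have hD0 : 0 < D := by positivity
  clear_value a D
  have haz : a ≠ 0 := ne_of_gt ha0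
  refine ⟨D, hD0, max (⌈2 * D / a⌉₊) (⌈2 * C * (4 / a ^ 2 + 48 / a ^ 3)⌉₊) + 1, ?_⟩
  intro J hJ c0 c1 c2 h2 h1 h0
  have hJ1 : 1 ≤ J := le_trans (Nat.le_add_left 1 _) hJ
  have hJR : (1 : ℝ) ≤ (J : ℝ) := by exact_mod_cast hJ1
  have hJ0 : (0 : ℝ) < (J : ℝ) := by linarith
  have hJa : (⌈2 * D / a⌉₊ : ℝ) ≤ (J : ℝ) := by
    have : ⌈2 * D / a⌉₊ ≤ J := le_trans (le_trans (le_max_left _ _) (Nat.le_succ _)) hJ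
    exact_mod_cast this
  have hJb : (⌈2 * C * (4 / a ^ 2 + 48 / a ^ 3)⌉₊ : ℝ) ≤ (J : ℝ) := by
    have : ⌈2 * C * (4 / a ^ 2 + 48 / a ^ 3)⌉₊ ≤ J :=
      le_trans (le_trans (le_max_right _ _) (Nat.le_succ _)) hJ
    exact_mod_cast this
  have hDJ : D / J ≤ a / 2 := by
    rw [div_le_div_iff₀ hJ0 two_pos]
    have h1' : 2 * D / a ≤ (J : ℝ) := le_trans (Nat.le_ceil _) hJa
    calc D * 2 = (2 * D / a) * a := by field_simp
      _ ≤ (J : ℝ) * a := by nlinarith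
      _ = a * J := by ring
  have hK : C / J * (4 / a ^ 2 + 48 / a ^ 3) ≤ 1 / 2 := by
    have h1' : 2 * C * (4 / a ^ 2 + 48 / a ^ 3) ≤ (J : ℝ) := le_trans (Nat.le_ceil _) hJb
    rw [div_mul_eq_mul_div, div_le_div_iff₀ hJ0 two_pos]
    nlinarith
  have hCJ2 : C / (J : ℝ) ^ 2 ≤ C / J := by
    rw [div_le_div_iff₀ (by positivity) hJ0]
    have h' : 0 ≤ C * ((J:ℝ) * ((J:ℝ) - 1)) :=
      mul_nonneg hC.le (mul_nonneg hJ0.le (by linarith))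
    nlinarith [h']
  set T : ℂ → ℂ := fun ξ => (a : ℂ) - c2 - c1 / ξ - c0 / ξ ^ 2 with hT
  set s : Set ℂ := Metric.closedBall ((a : ℂ)) (D / J) with hs
  clear_value T s
  have hcast : ((a : ℝ) : ℂ) = (g : ℂ) ^ 2 := by rw [ha]; push_cast; ring
  have haa : ‖((a : ℝ) : ℂ)‖ = a := by
    rw [Complex.norm_real, Real.norm_eq_abs, abs_of_pos ha0]
  have hlb : ∀ ξ ∈ s, a / 2 ≤ ‖ξ‖ := by
    intro ξ hξ
    rw [hs, Metric.mem_closedBall, Complex.dist_eq] at hξ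
    have h3 := norm_sub_norm_le ((a : ℝ) : ℂ) ξ
    rw [haa, norm_sub_rev] at h3
    linarith
  have hub : ∀ ξ ∈ s, ‖ξ‖ ≤ 3 * a / 2 := by
    intro ξ hξ
    rw [hs, Metric.mem_closedBall, Complex.dist_eq] at hξ
    have h3 : ‖ξ‖ ≤ ‖(ξ - ((a : ℝ) : ℂ))‖ + a := by
      have := norm_add_le (ξ - ((a : ℝ) : ℂ)) ((a : ℝ) : ℂ)
      simpa [haa, abs_of_pos ha0] using this
    linarith
  have hpos : ∀ ξ ∈ s, 0 < ‖ξ‖ :=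
    fun ξ hξ => lt_of_lt_of_le (by positivity) (hlb ξ hξ)
  have hne : ∀ ξ ∈ s, ξ ≠ 0 := by
    intro ξ hξ h
    have := hpos ξ hξ
    rw [h] at this; simp at this
  have hmaps : Set.MapsTo T s s := by
    intro ξ hξ
    have hξ0 : ξ ≠ 0 := hne ξ hξ
    have hlξ := hlb ξ hξ
    have hx : 0 < ‖ξ‖ := hpos ξ hξ
    rw [hs, Metric.mem_closedBall, Complex.dist_eq]
    have heq : T ξ - ((a : ℝ) : ℂ) = -(c2 + c1 / ξ + c0 / ξ ^ 2) := by
      simp only [hT]; ring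
    rw [heq, norm_neg]
    have hb1 : ‖(c1 / ξ)‖ ≤ (C / J) * (2 / a) := by
      rw [norm_div, div_le_iff₀ hx]
      calc ‖c1‖ ≤ C / J := h1
        _ = (C / J) * (2 / a) * (a / 2) := by field_simp
        _ ≤ (C / J) * (2 / a) * ‖ξ‖ := by gcongr
    have hb2 : ‖(c0 / ξ ^ 2)‖ ≤ (C / J) * (4 / a ^ 2) := by
      rw [norm_div, norm_pow, div_le_iff₀ (pow_pos hx 2)]
      calc ‖c0‖ ≤ C / J ^ 2 := h0
        _ ≤ C / J := hCJ2
        _ = C / J * (4 / a ^ 2) * ((a / 2) ^ 2) := by field_simp; ring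
        _ ≤ C / J * (4 / a ^ 2) * ‖ξ‖ ^ 2 := by gcongr
    calc ‖(c2 + c1 / ξ + c0 / ξ ^ 2)‖
        ≤ ‖(c2 + c1 / ξ)‖ + ‖(c0 / ξ ^ 2)‖ := norm_add_le _ _
      _ ≤ (‖c2‖ + ‖(c1 / ξ)‖) + ‖(c0 / ξ ^ 2)‖ := by
          gcongr; exact norm_add_le _ _
      _ ≤ (C / J + (C / J) * (2 / a)) + (C / J) * (4 / a ^ 2) := by gcongr
      _ = D / J := by rw [hD]; field_simp
  have hlip : LipschitzOnWith (1/2 : NNReal) T s := by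
    apply LipschitzOnWith.of_dist_le_mul
    intro ξ hξ η hη
    have hξ0 : ξ ≠ 0 := hne ξ hξ
    have hη0 : η ≠ 0 := hne η hη
    have hxp : 0 < ‖ξ‖ := hpos ξ hξ
    have hyp : 0 < ‖η‖ := hpos η hη
    have key : T ξ - T η = (ξ - η) * (c1 / (ξ * η) + c0 * (ξ + η) / (ξ ^ 2 * η ^ 2)) := by
      simp only [hT]; field_simp; ring
    rw [Complex.dist_eq, Complex.dist_eq, key, norm_mul]
    have hfac : ‖(c1 / (ξ * η) + c0 * (ξ + η) / (ξ ^ 2 * η ^ 2))‖ ≤ 1 / 2 := by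
      have hb1 : ‖(c1 / (ξ * η))‖ ≤ C / J * (4 / a ^ 2) := by
        rw [norm_div, norm_mul, div_le_iff₀ (mul_pos hxp hyp)]
        calc ‖c1‖ ≤ C / J := h1
          _ = C / J * (4 / a ^ 2) * (a / 2 * (a / 2)) := by field_simp; ring
          _ ≤ C / J * (4 / a ^ 2) * (‖ξ‖ * ‖η‖) := by
              gcongr <;> [exact hlb ξ hξ; exact hlb η hη]
      have hb2 : ‖(c0 * (ξ + η) / (ξ ^ 2 * η ^ 2))‖ ≤ C / J * (48 / a ^ 3) := by
        rw [norm_div, norm_mul, norm_mul, norm_pow, norm_pow,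
          div_le_iff₀ (mul_pos (pow_pos hxp 2) (pow_pos hyp 2))]
        have hsum : ‖(ξ + η)‖ ≤ 3 * a := by
          calc ‖(ξ + η)‖ ≤ ‖ξ‖ + ‖η‖ := norm_add_le _ _
            _ ≤ 3 * a / 2 + 3 * a / 2 := add_le_add (hub ξ hξ) (hub η hη)
            _ = 3 * a := by ring
        have hc0J : ‖c0‖ ≤ C / J := le_trans h0 hCJ2
        calc ‖c0‖ * ‖(ξ + η)‖ ≤ (C / J) * (3 * a) := by
              apply mul_le_mul hc0J hsum (norm_nonneg _) (by positivity)
          _ = C / J * (48 / a ^ 3) * ((a / 2) ^ 2 * (a / 2) ^ 2) := by field_simp; ring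
          _ ≤ C / J * (48 / a ^ 3) * (‖ξ‖ ^ 2 * ‖η‖ ^ 2) := by
              gcongr <;> [exact hlb ξ hξ; exact hlb η hη]
      calc ‖(c1 / (ξ * η) + c0 * (ξ + η) / (ξ ^ 2 * η ^ 2))‖
          ≤ ‖(c1 / (ξ * η))‖ + ‖(c0 * (ξ + η) / (ξ ^ 2 * η ^ 2))‖ :=
            norm_add_le _ _
        _ ≤ C / J * (4 / a ^ 2) + C / J * (48 / a ^ 3) := add_le_add hb1 hb2
        _ = C / J * (4 / a ^ 2 + 48 / a ^ 3) := by ring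
        _ ≤ 1 / 2 := hK
    calc ‖(ξ - η)‖ * ‖(c1 / (ξ * η) + c0 * (ξ + η) / (ξ ^ 2 * η ^ 2))‖
        ≤ ‖(ξ - η)‖ * (1 / 2) := by gcongr
      _ = ((1/2 : NNReal) : ℝ) * ‖(ξ - η)‖ := by push_cast; ring
  have hsc : IsComplete s := by rw [hs]; exact Metric.isClosed_closedBall.isComplete
  have hcontr : ContractingWith (1/2 : NNReal) (hmaps.restrict T s s) :=
    ⟨by rw [← NNReal.coe_lt_coe]; norm_num, hlip.mapsToRestrict hmaps⟩
  have hxs : ((a : ℝ) : ℂ) ∈ s := by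
    rw [hs, Metric.mem_closedBall, dist_self]; positivity
  obtain ⟨y, hys, hfy, -, -⟩ :=
    hcontr.exists_fixedPoint' hsc hmaps hxs (edist_ne_top _ _)
  have hroot : ∀ ξ ∈ s, (ξ ^ 3 + (c2 - (g : ℂ) ^ 2) * ξ ^ 2 + c1 * ξ + c0 = 0 ↔ T ξ = ξ) := by
    intro ξ hξ
    have hξ0 : ξ ≠ 0 := hne ξ hξ
    have hfactor : ξ ^ 3 + (c2 - (g : ℂ) ^ 2) * ξ ^ 2 + c1 * ξ + c0 = ξ ^ 2 * (ξ - T ξ) := by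
      rw [hT, ← hcast]; field_simp; ring
    rw [hfactor]
    constructor
    · intro h
      rcases mul_eq_zero.mp h with h' | h'
      · exact absurd h' (pow_ne_zero 2 hξ0)
      · linear_combination -h'
    · intro h; rw [sub_eq_zero.mpr h.symm]; ring
  have hmem : ∀ ξ : ℂ, ‖(ξ - (g : ℂ) ^ 2)‖ ≤ D / J ↔ ξ ∈ s := by
    intro ξ
    rw [hs, Metric.mem_closedBall, Complex.dist_eq, hcast]
  refine ⟨y, ⟨(hroot y hys).mpr hfy, (hmem y).mpr hys⟩, ?_⟩
  rintro z ⟨hz1, hz2⟩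
  have hzs : z ∈ s := (hmem z).mp hz2
  have hzfix : T z = z := (hroot z hzs).mp hz1
  have hcon := hlip.dist_le_mul z hzs y hys
  rw [hzfix, hfy] at hcon
  have h12 : ((1/2 : NNReal) : ℝ) = 1/2 := by norm_num
  rw [h12] at hcon
  have hle0 : dist z y ≤ 0 := by linarith
  exact dist_eq_zero.mp (le_antisymm hle0 dist_nonneg)
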